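/- For every Y ∈ ℝ and K⁺, K⁻ ∈ ℝⁿ, taking u = K⁺·Y·1{Y ≥ 0} + K⁻·Y·1{Y < 0} (so Y' = sY + P'u), the random variable m is integrable and E[m] = ρ's·Y + α⁺(K⁺)·Y·1{Y ≥ 0} + α⁻(K⁻)·Y·1{Y < 0}. -/

import Mathlib

open MeasureTheory

/-- The random variable `m = ρ'Y' + a⁺Y'·1{Y' ≥ 0} + a⁻Y'·1{Y' < 0}`,
where `Y' = sY + P'u`. -/
noncomputable def mRV {Ω : Type*} {n : ℕ} (P : Ω → EuclideanSpace ℝ (Fin n))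
    (s ρ' ap am : ℝ) (Y : ℝ) (u : EuclideanSpace ℝ (Fin n)) (ω : Ω) : ℝ :=
  let Y' : ℝ := s * Y + inner ℝ (P ω) u
  ρ' * Y' + ap * Y' * (if 0 ≤ Y' then (1:ℝ) else 0) +
    am * Y' * (if Y' < 0 then (1:ℝ) else 0)

/-- The random variable `q = ρ'²Y'² + (2ρ'a⁺+b⁺)Y'²·1{Y' ≥ 0} + (2ρ'a⁻+b⁻)Y'²·1{Y' < 0}`,
where `Y' = sY + P'u`. -/
noncomputable def qRV {Ω : Type*} {n : ℕ} (P : Ω → EuclideanSpace ℝ (Fin n))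
    (s ρ' ap am bp bm : ℝ) (Y : ℝ) (u : EuclideanSpace ℝ (Fin n)) (ω : Ω) : ℝ :=
  let Y' : ℝ := s * Y + inner ℝ (P ω) u
  ρ' ^ 2 * Y' ^ 2 + (2 * ρ' * ap + bp) * Y' ^ 2 * (if 0 ≤ Y' then (1:ℝ) else 0) +
    (2 * ρ' * am + bm) * Y' ^ 2 * (if Y' < 0 then (1:ℝ) else 0)

/-- `α⁺(K) = ρ'E[P']K + E[a⁺(s+P'K)·1{s+P'K ≥ 0}] + E[a⁻(s+P'K)·1{s+P'K < 0}]`. -/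
noncomputable def alphaPlus {Ω : Type*} [MeasurableSpace Ω] (ℙ : Measure Ω) {n : ℕ}
    (P : Ω → EuclideanSpace ℝ (Fin n)) (s ρ' ap am : ℝ)
    (K : EuclideanSpace ℝ (Fin n)) : ℝ :=
  let pk : Ω → ℝ := fun ω => inner ℝ (P ω) K
  ρ' * (∫ ω, pk ω ∂ℙ) +
  (∫ ω, ap * (s + pk ω) * (if 0 ≤ s + pk ω then (1:ℝ) else 0) ∂ℙ) +
  (∫ ω, am * (s + pk ω) * (if s + pk ω < 0 then (1:ℝ) else 0) ∂ℙ)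

/-- `α⁻(K) = ρ'E[P']K + E[a⁺(s+P'K)·1{s+P'K ≤ 0}] + E[a⁻(s+P'K)·1{s+P'K > 0}]`. -/
noncomputable def alphaMinus {Ω : Type*} [MeasurableSpace Ω] (ℙ : Measure Ω) {n : ℕ}
    (P : Ω → EuclideanSpace ℝ (Fin n)) (s ρ' ap am : ℝ)
    (K : EuclideanSpace ℝ (Fin n)) : ℝ :=
  let pk : Ω → ℝ := fun ω => inner ℝ (P ω) K
  ρ' * (∫ ω, pk ω ∂ℙ) +
  (∫ ω, ap * (s + pk ω) * (if s + pk ω ≤ 0 then (1:ℝ) else 0) ∂ℙ) +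
  (∫ ω, am * (s + pk ω) * (if 0 < s + pk ω then (1:ℝ) else 0) ∂ℙ)

/-- The piecewise-linear feedback policy `u = K⁺·Y·1{Y ≥ 0} + K⁻·Y·1{Y < 0}`. -/
noncomputable def uPol {n : ℕ} (Y : ℝ) (Kp Km : EuclideanSpace ℝ (Fin n)) :
    EuclideanSpace ℝ (Fin n) :=
  (Y * (if 0 ≤ Y then (1:ℝ) else 0)) • Kp + (Y * (if Y < 0 then (1:ℝ) else 0)) • Km


section Helpers

variable {Ω : Type*} [MeasurableSpace Ω] {ℙ : Measure Ω} [IsProbabilityMeasure ℙ]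
  {n : ℕ} {P : Ω → EuclideanSpace ℝ (Fin n)}

lemma integrable_normP (hmeas : Measurable P)
    (hL2 : Integrable (fun ω => ‖P ω‖ ^ 2) ℙ) :
    Integrable (fun ω => ‖P ω‖) ℙ := by
  refine ((integrable_const (1:ℝ)).add hL2).mono
    hmeas.norm.aestronglyMeasurable (ae_of_all _ fun ω => ?_)
  have h0 : (0:ℝ) ≤ ‖P ω‖ := norm_nonneg _
  simp only [Pi.add_apply, Real.norm_eq_abs]
  rw [abs_of_nonneg h0, abs_of_nonneg (by positivity)]
  nlinarith

lemma integrable_pk (hmeas : Measurable P)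
    (hL2 : Integrable (fun ω => ‖P ω‖ ^ 2) ℙ) (K : EuclideanSpace ℝ (Fin n)) :
    Integrable (fun ω => (inner ℝ (P ω) K : ℝ)) ℙ := by
  refine ((integrable_normP hmeas hL2).mul_const ‖K‖).mono
    (hmeas.inner measurable_const).aestronglyMeasurable (ae_of_all _ fun ω => ?_)
  simp only [Real.norm_eq_abs]
  rw [abs_of_nonneg (by positivity : (0:ℝ) ≤ ‖P ω‖ * ‖K‖)]
  exact abs_real_inner_le_norm _ _

lemma measurable_pk (hmeas : Measurable P) (K : EuclideanSpace ℝ (Fin n)) :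
    Measurable (fun ω => (inner ℝ (P ω) K : ℝ)) :=
  hmeas.inner measurable_const

lemma integrable_mul_ite {g : Ω → ℝ} (hg : Integrable g ℙ) (hgm : Measurable g)
    (c : ℝ) {p : Ω → Prop} [DecidablePred p] (hp : MeasurableSet {ω | p ω}) :
    Integrable (fun ω => c * g ω * (if p ω then (1:ℝ) else 0)) ℙ := by
  refine (hg.abs.const_mul |c|).mono
    (((measurable_const.mul hgm).mul
      (Measurable.ite hp measurable_const measurable_const)).aestronglyMeasurable)
    (ae_of_all _ fun ω => ?_)
  simp only [Real.norm_eq_abs, abs_mul, abs_abs]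
  by_cases h : p ω <;> simp [h] <;> positivity

end Helpers

/-- For every `Y ∈ ℝ` and `K⁺, K⁻ ∈ ℝⁿ`, with `u = K⁺·Y·1{Y ≥ 0} + K⁻·Y·1{Y < 0}`
(so `Y' = sY + P'u`), the random variable `m` is integrable and
`E[m] = ρ's·Y + α⁺(K⁺)·Y·1{Y ≥ 0} + α⁻(K⁻)·Y·1{Y < 0}`. -/
theorem expectation_m_eq {Ω : Type*} [MeasurableSpace Ω] (ℙ : Measure Ω)
    [IsProbabilityMeasure ℙ] {n : ℕ} (hn : 1 ≤ n)
    (P : Ω → EuclideanSpace ℝ (Fin n)) (hmeas : Measurable P)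
    (hL2 : Integrable (fun ω => ‖P ω‖ ^ 2) ℙ)
    (s ρ' ap am : ℝ) (hs : 0 < s) (hρ : 0 < ρ') :
    ∀ (Y : ℝ) (Kp Km : EuclideanSpace ℝ (Fin n)),
      Integrable (fun ω => mRV P s ρ' ap am Y (uPol Y Kp Km) ω) ℙ ∧
      (∫ ω, mRV P s ρ' ap am Y (uPol Y Kp Km) ω ∂ℙ) =
        ρ' * s * Y + alphaPlus ℙ P s ρ' ap am Kp * Y * (if 0 ≤ Y then (1:ℝ) else 0) +
          alphaMinus ℙ P s ρ' ap am Km * Y * (if Y < 0 then (1:ℝ) else 0) := by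
  intro Y Kp Km
  rcases lt_trichotomy Y 0 with hY | hY | hY
  · -- Y < 0
    have hpk : (fun ω => (inner ℝ (P ω) Km : ℝ)) = fun ω => (inner ℝ (P ω) Km : ℝ) := rfl
    set pk : Ω → ℝ := fun ω => (inner ℝ (P ω) Km : ℝ) with hpkdef
    have hpki : Integrable pk ℙ := integrable_pk hmeas hL2 Km
    have hpkm : Measurable pk := measurable_pk hmeas Km
    have hg : Integrable (fun ω => s + pk ω) ℙ := (integrable_const s).add hpki
    have hgm : Measurable (fun ω => s + pk ω) := measurable_const.add hpkm
    have h1 : Integrable (fun ω => ρ' * (s + pk ω)) ℙ := hg.const_mul ρ'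
    have h2 : Integrable
        (fun ω => ap * (s + pk ω) * (if s + pk ω ≤ 0 then (1:ℝ) else 0)) ℙ :=
      integrable_mul_ite hg hgm ap (measurableSet_le hgm measurable_const)
    have h3 : Integrable
        (fun ω => am * (s + pk ω) * (if 0 < s + pk ω then (1:ℝ) else 0)) ℙ :=
      integrable_mul_ite hg hgm am (measurableSet_lt measurable_const hgm)
    have hfun : (fun ω => mRV P s ρ' ap am Y (uPol Y Kp Km) ω) =
        fun ω => Y * (ρ' * (s + pk ω) +
          ap * (s + pk ω) * (if s + pk ω ≤ 0 then (1:ℝ) else 0) +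
          am * (s + pk ω) * (if 0 < s + pk ω then (1:ℝ) else 0)) := by
      funext ω
      have hu : (inner ℝ (P ω) (uPol Y Kp Km) : ℝ) = Y * pk ω := by
        simp only [uPol, if_neg (not_le.mpr hY), if_pos hY, mul_zero, mul_one,
          zero_smul, zero_add, real_inner_smul_right, hpkdef]
      simp only [mRV, hu]
      have ht : s * Y + Y * pk ω = Y * (s + pk ω) := by ring
      rw [ht]
      have e1 : (0 ≤ Y * (s + pk ω)) ↔ (s + pk ω ≤ 0) := by
        constructor
        · intro h; nlinarith
        · intro h; nlinarith
      have e2 : (Y * (s + pk ω) < 0) ↔ (0 < s + pk ω) := by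
        constructor
        · intro h; nlinarith
        · intro h; nlinarith
      simp only [e1, e2]
      ring
    have h12 : Integrable (fun ω => ρ' * (s + pk ω) +
        ap * (s + pk ω) * (if s + pk ω ≤ 0 then (1:ℝ) else 0)) ℙ := h1.add h2
    have hi1 : (∫ ω, ρ' * (s + pk ω) ∂ℙ) = ρ' * (s + ∫ ω, pk ω ∂ℙ) := by
      rw [integral_const_mul, integral_add (integrable_const s) hpki, integral_const]
      simp [measure_univ]
    refine ⟨by rw [hfun]; exact (((h1.add h2).add h3).const_mul Y), ?_⟩
    rw [hfun, integral_const_mul, integral_add h12 h3, integral_add h1 h2, hi1]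
    simp only [alphaMinus, alphaPlus, if_neg (not_le.mpr hY), if_pos hY, measure_univ,
      ENNReal.toReal_one, smul_eq_mul, one_mul, hpkdef, mul_zero, zero_mul, add_zero]
    ring
  · -- Y = 0
    subst hY
    have hz : (fun ω => mRV P s ρ' ap am 0 (uPol 0 Kp Km) ω) = fun _ => (0:ℝ) := by
      funext ω; simp [mRV, uPol]
    refine ⟨by rw [hz]; exact integrable_const 0, ?_⟩
    rw [hz]; simp
  · -- Y > 0
    set pk : Ω → ℝ := fun ω => (inner ℝ (P ω) Kp : ℝ) with hpkdef
    have hpki : Integrable pk ℙ := integrable_pk hmeas hL2 Kp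
    have hpkm : Measurable pk := measurable_pk hmeas Kp
    have hg : Integrable (fun ω => s + pk ω) ℙ := (integrable_const s).add hpki
    have hgm : Measurable (fun ω => s + pk ω) := measurable_const.add hpkm
    have h1 : Integrable (fun ω => ρ' * (s + pk ω)) ℙ := hg.const_mul ρ'
    have h2 : Integrable
        (fun ω => ap * (s + pk ω) * (if 0 ≤ s + pk ω then (1:ℝ) else 0)) ℙ :=
      integrable_mul_ite hg hgm ap (measurableSet_le measurable_const hgm)
    have h3 : Integrable
        (fun ω => am * (s + pk ω) * (if s + pk ω < 0 then (1:ℝ) else 0)) ℙ :=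
      integrable_mul_ite hg hgm am (measurableSet_lt hgm measurable_const)
    have hfun : (fun ω => mRV P s ρ' ap am Y (uPol Y Kp Km) ω) =
        fun ω => Y * (ρ' * (s + pk ω) +
          ap * (s + pk ω) * (if 0 ≤ s + pk ω then (1:ℝ) else 0) +
          am * (s + pk ω) * (if s + pk ω < 0 then (1:ℝ) else 0)) := by
      funext ω
      have hu : (inner ℝ (P ω) (uPol Y Kp Km) : ℝ) = Y * pk ω := by
        simp only [uPol, if_pos hY.le, if_neg (not_lt.mpr hY.le), mul_zero, mul_one,
          zero_smul, add_zero, real_inner_smul_right, hpkdef]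
      simp only [mRV, hu]
      have ht : s * Y + Y * pk ω = Y * (s + pk ω) := by ring
      rw [ht]
      have e1 : (0 ≤ Y * (s + pk ω)) ↔ (0 ≤ s + pk ω) := by
        constructor
        · intro h; nlinarith
        · intro h; nlinarith
      have e2 : (Y * (s + pk ω) < 0) ↔ (s + pk ω < 0) := by
        constructor
        · intro h; nlinarith
        · intro h; nlinarith
      simp only [e1, e2]
      ring
    have h12 : Integrable (fun ω => ρ' * (s + pk ω) +
        ap * (s + pk ω) * (if 0 ≤ s + pk ω then (1:ℝ) else 0)) ℙ := h1.add h2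
    have hi1 : (∫ ω, ρ' * (s + pk ω) ∂ℙ) = ρ' * (s + ∫ ω, pk ω ∂ℙ) := by
      rw [integral_const_mul, integral_add (integrable_const s) hpki, integral_const]
      simp [measure_univ]
    refine ⟨by rw [hfun]; exact (((h1.add h2).add h3).const_mul Y), ?_⟩
    rw [hfun, integral_const_mul, integral_add h12 h3, integral_add h1 h2, hi1]
    simp only [alphaMinus, alphaPlus, if_pos hY.le, if_neg (not_lt.mpr hY.le), measure_univ,
      ENNReal.toReal_one, smul_eq_mul, one_mul, hpkdef, mul_zero, zero_mul, add_zero]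
    ring
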